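/- arXiv:1706.02152 — 2 statements merged into one kernel-verified Lean document; each statement's English description precedes it below -/
import Mathlib

section
/- Let $v \in C^2([0,1]\times[0,\infty))$ solve $v_{tt}=v_{xx}$, and let $E(t) = \int_0^1 [v_x^2(x,t)+v_t^2(x,t)]\,dx$. Then for every $t \ge 1$, $\int_0^1 v_t^2(0, t-x)\,dx \le 3 \max_{s\in[t-1,t]} E(s)$. -/
open MeasureTheory Set

private lemma const_of_hasDerivAt_zero {g : ℝ → ℝ} {a b : ℝ} (hab : a ≤ b)
    (hc : ContinuousOn g (Icc a b))
    (hd : ∀ s ∈ Ioo a b, HasDerivAt g 0 s) : g b = g a := by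
  have hdiff : DifferentiableOn ℝ g (interior (Icc a b)) := by
    rw [interior_Icc]
    exact fun s hs => (hd s hs).differentiableAt.differentiableWithinAt
  have hd0 : ∀ s ∈ interior (Icc a b), deriv g s = 0 := by
    rw [interior_Icc]
    exact fun s hs => (hd s hs).deriv
  have h1 := monotoneOn_of_deriv_nonneg (convex_Icc a b) hc hdiff (fun s hs => (hd0 s hs).ge)
  have h2 := antitoneOn_of_deriv_nonpos (convex_Icc a b) hc hdiff (fun s hs => (hd0 s hs).le)
  exact le_antisymm (h2 (left_mem_Icc.2 hab) (right_mem_Icc.2 hab) hab)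
    (h1 (left_mem_Icc.2 hab) (right_mem_Icc.2 hab) hab)

/-- Boundary-trace estimate: for a classical solution of the 1-D wave equation with
energy `E(t) = ∫₀¹ (vₓ² + vₜ²) dx`, for all `t ≥ 1`,
`∫₀¹ vₜ²(0, t-x) dx ≤ 3 max_{s ∈ [t-1,t]} E(s)`. -/
theorem stmt2
    (v vx vt vxx vtt : ℝ → ℝ → ℝ)
    (hsm : ContDiff ℝ 2 (Function.uncurry v))
    (hvx : ∀ x t, HasDerivAt (fun y => v y t) (vx x t) x)
    (hvt : ∀ x t, HasDerivAt (fun s => v x s) (vt x t) t)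
    (hvxx : ∀ x t, HasDerivAt (fun y => vx y t) (vxx x t) x)
    (hvtt : ∀ x t, HasDerivAt (fun s => vt x s) (vtt x t) t)
    (hwave : ∀ x ∈ Ioo (0:ℝ) 1, ∀ t > (0:ℝ), vtt x t = vxx x t)
    (E : ℝ → ℝ)
    (hE : ∀ t, E t = ∫ x in (0:ℝ)..1, (vx x t ^ 2 + vt x t ^ 2)) :
    ∀ t ≥ (1:ℝ),
      (∫ x in (0:ℝ)..1, vt 0 (t - x) ^ 2) ≤ 3 * sSup (E '' Icc (t - 1) t) := by
  have hd1 : Differentiable ℝ (Function.uncurry v) := hsm.differentiable two_ne_zero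
  set D := fderiv ℝ (Function.uncurry v) with hDdef
  have hd2 : ContDiff ℝ 1 D := hsm.fderiv_right (by norm_num)
  have hd2' : Differentiable ℝ D := hd2.differentiable one_ne_zero
  have hDc : Continuous D := hd2.continuous
  have hpathx : ∀ (x t : ℝ), HasDerivAt (fun y : ℝ => (y, t)) (((1:ℝ), (0:ℝ))) x :=
    fun x t => (hasDerivAt_id x).prodMk (hasDerivAt_const x t)
  have hpatht : ∀ (x t : ℝ), HasDerivAt (fun s : ℝ => (x, s)) (((0:ℝ), (1:ℝ))) t :=
    fun x t => (hasDerivAt_const t x).prodMk (hasDerivAt_id t)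
  have hvx' : ∀ x t, vx x t = D (x, t) (1, 0) := by
    intro x t
    have h := ((hd1 (x, t)).hasFDerivAt).comp_hasDerivAt x (hpathx x t)
    exact (hvx x t).unique h
  have hvt' : ∀ x t, vt x t = D (x, t) (0, 1) := by
    intro x t
    exact (hvt x t).unique (((hd1 (x, t)).hasFDerivAt).comp_hasDerivAt t (hpatht x t))
  have hBx : ∀ (w : ℝ × ℝ) x t, HasDerivAt (fun y => D (y, t) w)
      (fderiv ℝ D (x, t) (1, 0) w) x := by
    intro w x t
    have h3 : HasDerivAt (fun y => D (y, t)) (fderiv ℝ D (x, t) (1, 0)) x :=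
      ((hd2' (x, t)).hasFDerivAt).comp_hasDerivAt x (hpathx x t)
    simpa using h3.clm_apply (hasDerivAt_const x w)
  have hBt : ∀ (w : ℝ × ℝ) x t, HasDerivAt (fun s => D (x, s) w)
      (fderiv ℝ D (x, t) (0, 1) w) t := by
    intro w x t
    have h3 : HasDerivAt (fun s => D (x, s)) (fderiv ℝ D (x, t) (0, 1)) t :=
      ((hd2' (x, t)).hasFDerivAt).comp_hasDerivAt t (hpatht x t)
    simpa using h3.clm_apply (hasDerivAt_const t w)
  have hvxx' : ∀ x t, vxx x t = fderiv ℝ D (x, t) (1, 0) (1, 0) := by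
    intro x t
    have h := hBx (1, 0) x t
    rw [show (fun y => D (y, t) ((1:ℝ), (0:ℝ))) = fun y => vx y t from
      funext fun y => (hvx' y t).symm] at h
    exact (hvxx x t).unique h
  have hvtt' : ∀ x t, vtt x t = fderiv ℝ D (x, t) (0, 1) (0, 1) := by
    intro x t
    have h := hBt (0, 1) x t
    rw [show (fun s => D (x, s) ((0:ℝ), (1:ℝ))) = fun s => vt x s from
      funext fun s => (hvt' x s).symm] at h
    exact (hvtt x t).unique h
  have hsym : ∀ (z : ℝ × ℝ) (a b : ℝ × ℝ), fderiv ℝ D z a b = fderiv ℝ D z b a :=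
    fun z => hsm.contDiffAt.isSymmSndFDerivAt (by norm_num)
  -- characteristic derivative lemmas
  have hP : ∀ (c : ℝ) (s : ℝ), s ∈ Ioo (0:ℝ) 1 → c - s > 0 →
      HasDerivAt (fun s : ℝ => D (s, c - s) ((1:ℝ), (1:ℝ))) 0 s := by
    intro c s hs hcs
    have hγ : HasDerivAt (fun s : ℝ => ((s, c - s) : ℝ × ℝ)) (((1:ℝ), (-1:ℝ))) s :=
      (hasDerivAt_id s).prodMk (((hasDerivAt_id s).const_sub c))
    have h3 : HasDerivAt (fun s : ℝ => D (s, c - s))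
        (fderiv ℝ D (s, c - s) (1, -1)) s :=
      ((hd2' (s, c - s)).hasFDerivAt).comp_hasDerivAt s hγ
    have h4 := h3.clm_apply (hasDerivAt_const s (((1:ℝ), (1:ℝ))))
    have e1 : ((1:ℝ), (-1:ℝ)) = ((1:ℝ), (0:ℝ)) - ((0:ℝ), (1:ℝ)) := by norm_num
    have e2 : ((1:ℝ), (1:ℝ)) = ((1:ℝ), (0:ℝ)) + ((0:ℝ), (1:ℝ)) := by norm_num
    have hw := hwave s hs (c - s) hcs
    rw [hvtt' s (c - s), hvxx' s (c - s)] at hw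
    have hmix := hsym (s, c - s) (1, 0) (0, 1)
    have hz : fderiv ℝ D (s, c - s) (1, -1) ((1:ℝ), (1:ℝ)) = 0 := by
      rw [e1, e2, map_sub]
      simp only [ContinuousLinearMap.sub_apply, map_add]
      rw [hmix]
      linarith
    simp only [map_zero, add_zero] at h4
    rw [hz] at h4
    exact h4
  have hQ : ∀ (c : ℝ) (s : ℝ), s ∈ Ioo (0:ℝ) 1 → c + s > 0 →
      HasDerivAt (fun s : ℝ => D (s, c + s) ((-1:ℝ), (1:ℝ))) 0 s := by
    intro c s hs hcs
    have hγ : HasDerivAt (fun s : ℝ => ((s, c + s) : ℝ × ℝ)) (((1:ℝ), (1:ℝ))) s :=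
      (hasDerivAt_id s).prodMk (((hasDerivAt_id s).const_add c))
    have h3 : HasDerivAt (fun s : ℝ => D (s, c + s))
        (fderiv ℝ D (s, c + s) (1, 1)) s :=
      ((hd2' (s, c + s)).hasFDerivAt).comp_hasDerivAt s hγ
    have h4 := h3.clm_apply (hasDerivAt_const s (((-1:ℝ), (1:ℝ))))
    have e1 : ((1:ℝ), (1:ℝ)) = ((1:ℝ), (0:ℝ)) + ((0:ℝ), (1:ℝ)) := by norm_num
    have e2 : ((-1:ℝ), (1:ℝ)) = ((0:ℝ), (1:ℝ)) - ((1:ℝ), (0:ℝ)) := by norm_num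
    have hw := hwave s hs (c + s) hcs
    rw [hvtt' s (c + s), hvxx' s (c + s)] at hw
    have hmix := hsym (s, c + s) (1, 0) (0, 1)
    have hz : fderiv ℝ D (s, c + s) (1, 1) ((-1:ℝ), (1:ℝ)) = 0 := by
      rw [e1, e2, map_add]
      simp only [ContinuousLinearMap.add_apply, map_sub]
      rw [hmix]
      linarith
    simp only [map_zero, add_zero] at h4
    rw [hz] at h4
    exact h4
  -- continuity of directional derivatives
  have hPcont : Continuous (fun z : ℝ × ℝ => D z ((1:ℝ), (1:ℝ))) :=
    hDc.clm_apply continuous_const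
  have hQcont : Continuous (fun z : ℝ × ℝ => D z ((-1:ℝ), (1:ℝ))) :=
    hDc.clm_apply continuous_const
  have hvtcont : Continuous (fun z : ℝ × ℝ => vt z.1 z.2) := by
    have : Continuous (fun z : ℝ × ℝ => D z ((0:ℝ), (1:ℝ))) := hDc.clm_apply continuous_const
    exact this.congr (fun z => (hvt' z.1 z.2).symm)
  have hvxcont : Continuous (fun z : ℝ × ℝ => vx z.1 z.2) := by
    have : Continuous (fun z : ℝ × ℝ => D z ((1:ℝ), (0:ℝ))) := hDc.clm_apply continuous_const
    exact this.congr (fun z => (hvx' z.1 z.2).symm)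
  -- main part
  intro t ht
  -- constancy along characteristics
  have key1 : ∀ x ∈ Icc (0:ℝ) 1, D (0, t - x) ((1:ℝ), (1:ℝ)) = D (1 - x, t - 1) ((1:ℝ), (1:ℝ)) := by
    intro x hx
    have hab : (0:ℝ) ≤ 1 - x := by linarith [hx.2]
    have := const_of_hasDerivAt_zero (g := fun s => D (s, (t - x) - s) ((1:ℝ), (1:ℝ))) hab
      ((hPcont.comp ((continuous_id).prodMk (continuous_const.sub continuous_id))).continuousOn)
      (fun s hs => hP (t - x) s ⟨hs.1, lt_of_lt_of_le hs.2 (by linarith [hx.1])⟩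
        (by simp only [gt_iff_lt]; linarith [hs.2]))
    simpa [show t - x - (1 - x) = t - 1 by ring] using this.symm
  have key2 : ∀ x ∈ Icc (0:ℝ) 1, D (0, t - x) ((-1:ℝ), (1:ℝ)) = D (x, t) ((-1:ℝ), (1:ℝ)) := by
    intro x hx
    have := const_of_hasDerivAt_zero (g := fun s => D (s, (t - x) + s) ((-1:ℝ), (1:ℝ))) hx.1
      ((hQcont.comp ((continuous_id).prodMk (continuous_const.add continuous_id))).continuousOn)
      (fun s hs => hQ (t - x) s ⟨hs.1, lt_of_lt_of_le hs.2 hx.2⟩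
        (by simp only [gt_iff_lt]; linarith [hs.1, hx.2]))
    simpa [show t - x + x = t by ring] using this.symm
  -- vt as average of characteristic quantities
  have hvtPQ : ∀ z : ℝ × ℝ, vt z.1 z.2 = (D z ((1:ℝ), (1:ℝ)) + D z ((-1:ℝ), (1:ℝ))) / 2 := by
    intro z
    have e3 : ((1:ℝ), (1:ℝ)) + ((-1:ℝ), (1:ℝ)) = (2:ℝ) • ((0:ℝ), (1:ℝ)) := by
      norm_num [Prod.ext_iff, Prod.smul_mk, smul_eq_mul]
    have : D z ((1:ℝ), (1:ℝ)) + D z ((-1:ℝ), (1:ℝ)) = 2 * D z ((0:ℝ), (1:ℝ)) := by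
      rw [← map_add, e3, ContinuousLinearMap.map_smul, smul_eq_mul]
    rw [this, hvt' z.1 z.2]; ring
  -- pointwise bound on [0,1]
  have hpoint : ∀ x ∈ Icc (0:ℝ) 1,
      vt 0 (t - x) ^ 2 ≤ (D (1 - x, t - 1) ((1:ℝ), (1:ℝ)) ^ 2 + D (x, t) ((-1:ℝ), (1:ℝ)) ^ 2) / 2 := by
    intro x hx
    have h1 := key1 x hx
    have h2 := key2 x hx
    have h3 := hvtPQ (0, t - x)
    simp only at h3
    rw [h3, h1, h2]
    nlinarith [sq_nonneg (D (1 - x, t - 1) ((1:ℝ), (1:ℝ)) - D (x, t) ((-1:ℝ), (1:ℝ)))]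
  -- integrability
  have hint1 : IntervalIntegrable (fun x => vt 0 (t - x) ^ 2) volume 0 1 := by
    exact ((hvtcont.comp (continuous_const.prodMk (continuous_const.sub continuous_id))).pow 2).intervalIntegrable 0 1
  have hint2 : IntervalIntegrable
      (fun x => (D (1 - x, t - 1) ((1:ℝ), (1:ℝ)) ^ 2 + D (x, t) ((-1:ℝ), (1:ℝ)) ^ 2) / 2) volume 0 1 := by
    apply Continuous.intervalIntegrable
    apply Continuous.div_const
    exact ((hPcont.comp ((continuous_const.sub continuous_id).prodMk continuous_const)).pow 2).add
      ((hQcont.comp ((continuous_id).prodMk continuous_const)).pow 2)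
  have step1 : (∫ x in (0:ℝ)..1, vt 0 (t - x) ^ 2) ≤
      ∫ x in (0:ℝ)..1, (D (1 - x, t - 1) ((1:ℝ), (1:ℝ)) ^ 2 + D (x, t) ((-1:ℝ), (1:ℝ)) ^ 2) / 2 :=
    intervalIntegral.integral_mono_on (by norm_num) hint1 hint2 hpoint
  -- reflection
  have hint3 : IntervalIntegrable (fun x => D (1 - x, t - 1) ((1:ℝ), (1:ℝ)) ^ 2) volume 0 1 :=
    ((hPcont.comp ((continuous_const.sub continuous_id).prodMk continuous_const)).pow 2).intervalIntegrable 0 1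
  have hint3' : IntervalIntegrable (fun y => D (y, t - 1) ((1:ℝ), (1:ℝ)) ^ 2) volume 0 1 :=
    ((hPcont.comp ((continuous_id).prodMk continuous_const)).pow 2).intervalIntegrable 0 1
  have hint4 : IntervalIntegrable (fun x => D (x, t) ((-1:ℝ), (1:ℝ)) ^ 2) volume 0 1 :=
    ((hQcont.comp ((continuous_id).prodMk continuous_const)).pow 2).intervalIntegrable 0 1
  have hrefl : (∫ x in (0:ℝ)..1, D (1 - x, t - 1) ((1:ℝ), (1:ℝ)) ^ 2) =
      ∫ y in (0:ℝ)..1, D (y, t - 1) ((1:ℝ), (1:ℝ)) ^ 2 := by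
    have := intervalIntegral.integral_comp_sub_left
      (fun y => D (y, t - 1) ((1:ℝ), (1:ℝ)) ^ 2) (1:ℝ) (a := 0) (b := 1)
    simpa using this
  -- bounds by energy
  have hEintegrable : ∀ s : ℝ, IntervalIntegrable (fun x => vx x s ^ 2 + vt x s ^ 2) volume 0 1 := by
    intro s
    apply Continuous.intervalIntegrable
    exact ((hvxcont.comp ((continuous_id).prodMk continuous_const)).pow 2).add
      ((hvtcont.comp ((continuous_id).prodMk continuous_const)).pow 2)
  have hPbound : (∫ y in (0:ℝ)..1, D (y, t - 1) ((1:ℝ), (1:ℝ)) ^ 2) ≤ 2 * E (t - 1) := by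
    have hpt : ∀ y ∈ Icc (0:ℝ) 1, D (y, t - 1) ((1:ℝ), (1:ℝ)) ^ 2 ≤
        2 * (vx y (t - 1) ^ 2 + vt y (t - 1) ^ 2) := by
      intro y _
      have e2 : ((1:ℝ), (1:ℝ)) = ((1:ℝ), (0:ℝ)) + ((0:ℝ), (1:ℝ)) := by norm_num
      have : D (y, t - 1) ((1:ℝ), (1:ℝ)) = vx y (t - 1) + vt y (t - 1) := by
        rw [e2, map_add, hvx' y (t - 1), hvt' y (t - 1)]
      rw [this]
      nlinarith [sq_nonneg (vx y (t - 1) - vt y (t - 1))]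
    calc (∫ y in (0:ℝ)..1, D (y, t - 1) ((1:ℝ), (1:ℝ)) ^ 2)
        ≤ ∫ y in (0:ℝ)..1, 2 * (vx y (t - 1) ^ 2 + vt y (t - 1) ^ 2) :=
          intervalIntegral.integral_mono_on (by norm_num) hint3'
            ((hEintegrable (t - 1)).const_mul 2) hpt
      _ = 2 * E (t - 1) := by
          rw [intervalIntegral.integral_const_mul, hE (t - 1)]
  have hQbound : (∫ x in (0:ℝ)..1, D (x, t) ((-1:ℝ), (1:ℝ)) ^ 2) ≤ 2 * E t := by
    have hpt : ∀ y ∈ Icc (0:ℝ) 1, D (y, t) ((-1:ℝ), (1:ℝ)) ^ 2 ≤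
        2 * (vx y t ^ 2 + vt y t ^ 2) := by
      intro y _
      have e2 : ((-1:ℝ), (1:ℝ)) = ((0:ℝ), (1:ℝ)) - ((1:ℝ), (0:ℝ)) := by norm_num
      have : D (y, t) ((-1:ℝ), (1:ℝ)) = vt y t - vx y t := by
        rw [e2, map_sub, hvx' y t, hvt' y t]
      rw [this]
      nlinarith [sq_nonneg (vx y t + vt y t)]
    calc (∫ x in (0:ℝ)..1, D (x, t) ((-1:ℝ), (1:ℝ)) ^ 2)
        ≤ ∫ y in (0:ℝ)..1, 2 * (vx y t ^ 2 + vt y t ^ 2) :=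
          intervalIntegral.integral_mono_on (by norm_num) hint4
            ((hEintegrable t).const_mul 2) hpt
      _ = 2 * E t := by rw [intervalIntegral.integral_const_mul, hE t]
  -- sup bounds
  have hne : (E '' Icc (t - 1) t).Nonempty := ⟨E t, t, right_mem_Icc.2 (by linarith), rfl⟩
  have hbdd : BddAbove (E '' Icc (t - 1) t) := by
    have hcompact : IsCompact (Icc (0:ℝ) 1 ×ˢ Icc (t - 1) t) := isCompact_Icc.prod isCompact_Icc
    have hcont : ContinuousOn (fun z : ℝ × ℝ => vx z.1 z.2 ^ 2 + vt z.1 z.2 ^ 2)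
        (Icc (0:ℝ) 1 ×ˢ Icc (t - 1) t) :=
      (((hvxcont.pow 2).add (hvtcont.pow 2))).continuousOn
    obtain ⟨C, hC⟩ := hcompact.exists_bound_of_continuousOn hcont
    refine ⟨C, ?_⟩
    rintro y ⟨s, hs, rfl⟩
    rw [hE s]
    calc (∫ x in (0:ℝ)..1, vx x s ^ 2 + vt x s ^ 2)
        ≤ ∫ _x in (0:ℝ)..1, C := by
          apply intervalIntegral.integral_mono_on (by norm_num) (hEintegrable s)
            intervalIntegrable_const
          intro x hx
          exact (le_abs_self _).trans (hC (x, s) ⟨hx, hs⟩)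
      _ = C := by simp
  have hEt1 : E (t - 1) ≤ sSup (E '' Icc (t - 1) t) :=
    le_csSup hbdd ⟨t - 1, left_mem_Icc.2 (by linarith), rfl⟩
  have hEt : E t ≤ sSup (E '' Icc (t - 1) t) :=
    le_csSup hbdd ⟨t, right_mem_Icc.2 (by linarith), rfl⟩
  have hM0 : 0 ≤ sSup (E '' Icc (t - 1) t) := by
    refine le_trans ?_ hEt
    rw [hE t]
    apply intervalIntegral.integral_nonneg (by norm_num)
    intro x _
    positivity
  -- combine
  have hsplit : (∫ x in (0:ℝ)..1,
      (D (1 - x, t - 1) ((1:ℝ), (1:ℝ)) ^ 2 + D (x, t) ((-1:ℝ), (1:ℝ)) ^ 2) / 2) =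
      ((∫ x in (0:ℝ)..1, D (1 - x, t - 1) ((1:ℝ), (1:ℝ)) ^ 2) +
       (∫ x in (0:ℝ)..1, D (x, t) ((-1:ℝ), (1:ℝ)) ^ 2)) / 2 := by
    rw [← intervalIntegral.integral_add hint3 hint4]
    simp only [intervalIntegral.integral_div]
  calc (∫ x in (0:ℝ)..1, vt 0 (t - x) ^ 2)
      ≤ ∫ x in (0:ℝ)..1,
          (D (1 - x, t - 1) ((1:ℝ), (1:ℝ)) ^ 2 + D (x, t) ((-1:ℝ), (1:ℝ)) ^ 2) / 2 := step1
    _ = ((∫ x in (0:ℝ)..1, D (1 - x, t - 1) ((1:ℝ), (1:ℝ)) ^ 2) +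
         (∫ x in (0:ℝ)..1, D (x, t) ((-1:ℝ), (1:ℝ)) ^ 2)) / 2 := hsplit
    _ ≤ (2 * E (t - 1) + 2 * E t) / 2 := by
        rw [hrefl]
        linarith [hPbound, hQbound]
    _ = E (t - 1) + E t := by ring
    _ ≤ 3 * sSup (E '' Icc (t - 1) t) := by linarith
end

section
/- Let $q > 0$, $q \ne 1$, and $c_0$ be such that $\frac{c_0 - q}{1-c_0} > 0$ and $c_0 \in \mathbb{R}\setminus\{1\}$. Suppose $w$ solves the wave equation $w_{tt}=w_{xx}$ on $(0,1)$ with anti-damping boundary condition $w_x(0,t) = -q\,w_t(0,t)$, and $Z$ solves the transport equation $Z_t = -Z_x$ with $Z(0,t) = -c_0\, w(0,t)$. Then $\tilde w := w + Z$ satisfies the wave equation $\tilde w_{tt} = \tilde w_{xx}$ with the damped boundary condition $\tilde w_x(0,t) = \frac{c_0-q}{1-c_0}\, \tilde w_t(0,t)$, provided $c_0\ne1$. -/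
open MeasureTheory Set

/-- For a C² function `Z` with partial derivatives `Zx`, `Zt`, the partial derivative
of `y ↦ Z y t` at `x` equals `fderiv` applied to `(1,0)`. -/
private lemma partial_x_eq (Z Zx : ℝ → ℝ → ℝ)
    (hd : Differentiable ℝ (Function.uncurry Z))
    (hZx : ∀ x t, HasDerivAt (fun y => Z y t) (Zx x t) x) (x t : ℝ) :
    Zx x t = fderiv ℝ (Function.uncurry Z) (x, t) (1, 0) := by
  have h1 : HasDerivAt (fun y => Z y t)
      (fderiv ℝ (Function.uncurry Z) (x, t) (1, 0)) x := by
    have := (hd (x, t)).hasFDerivAt.comp_hasDerivAt x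
      ((hasDerivAt_id x).prodMk (hasDerivAt_const x t))
    simpa [Function.comp_def] using this
  exact (hZx x t).unique h1

private lemma partial_t_eq (Z Zt : ℝ → ℝ → ℝ)
    (hd : Differentiable ℝ (Function.uncurry Z))
    (hZt : ∀ x t, HasDerivAt (fun s => Z x s) (Zt x t) t) (x t : ℝ) :
    Zt x t = fderiv ℝ (Function.uncurry Z) (x, t) (0, 1) := by
  have h1 : HasDerivAt (fun s => Z x s)
      (fderiv ℝ (Function.uncurry Z) (x, t) (0, 1)) t := by
    have := (hd (x, t)).hasFDerivAt.comp_hasDerivAt t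
      ((hasDerivAt_const t x).prodMk (hasDerivAt_id t))
    simpa [Function.comp_def] using this
  exact (hZt x t).unique h1

/-- Adding a transport state `Z` with inflow `Z(0,t) = -c₀ w(0,t)` converts the
anti-damper `wₓ(0,t) = -q wₜ(0,t)` into the passive damper
`w̃ₓ(0,t) = ((c₀-q)/(1-c₀)) w̃ₜ(0,t)` for `w̃ = w + Z`, which again solves the wave
equation. -/
theorem stmt14
    (q c0 : ℝ) (hq : 0 < q) (hq1 : q ≠ 1)
    (hc0 : (c0 - q) / (1 - c0) > 0) (hc0' : c0 ≠ 1)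
    (w wx wt wxx wtt : ℝ → ℝ → ℝ)
    (hsmw : ContDiff ℝ 2 (Function.uncurry w))
    (hwx : ∀ x t, HasDerivAt (fun y => w y t) (wx x t) x)
    (hwt : ∀ x t, HasDerivAt (fun s => w x s) (wt x t) t)
    (hwxx : ∀ x t, HasDerivAt (fun y => wx y t) (wxx x t) x)
    (hwtt : ∀ x t, HasDerivAt (fun s => wt x s) (wtt x t) t)
    (hwave : ∀ x t, wtt x t = wxx x t)
    (hwbc : ∀ t, wx 0 t = -q * wt 0 t)
    (Z Zx Zt Zxx Ztt : ℝ → ℝ → ℝ)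
    (hsmZ : ContDiff ℝ 2 (Function.uncurry Z))
    (hZx : ∀ x t, HasDerivAt (fun y => Z y t) (Zx x t) x)
    (hZt : ∀ x t, HasDerivAt (fun s => Z x s) (Zt x t) t)
    (hZxx : ∀ x t, HasDerivAt (fun y => Zx y t) (Zxx x t) x)
    (hZtt : ∀ x t, HasDerivAt (fun s => Zt x s) (Ztt x t) t)
    (htransport : ∀ x t, Zt x t = -Zx x t)
    (hZbc : ∀ t, Z 0 t = -c0 * w 0 t) :
    (∀ x t, wtt x t + Ztt x t = wxx x t + Zxx x t) ∧
    (∀ t, wx 0 t + Zx 0 t = (c0 - q) / (1 - c0) * (wt 0 t + Zt 0 t)) := by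
  set F := Function.uncurry Z with hF
  have hdF : Differentiable ℝ F := hsmZ.differentiable two_ne_zero
  set G : ℝ × ℝ → (ℝ × ℝ) →L[ℝ] ℝ := fderiv ℝ F with hG
  have hGc1 : ContDiff ℝ 1 G := hsmZ.fderiv_right (by norm_num)
  have hGd : Differentiable ℝ G := hGc1.differentiable one_ne_zero
  have hZxG : ∀ x t, Zx x t = G (x, t) (1, 0) := fun x t =>
    partial_x_eq Z Zx hdF hZx x t
  have hZtG : ∀ x t, Zt x t = G (x, t) (0, 1) := fun x t =>
    partial_t_eq Z Zt hdF hZt x t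
  constructor
  · intro x t
    -- second derivative and its symmetry
    set D : (ℝ × ℝ) →L[ℝ] (ℝ × ℝ) →L[ℝ] ℝ := fderiv ℝ G (x, t) with hD
    have hsym : D (0, 1) (1, 0) = D (1, 0) (0, 1) :=
      hsmZ.contDiffAt.isSymmSndFDerivAt (by norm_num) (0, 1) (1, 0)
    -- Ztt x t = - D (0,1) (1,0)
    have h1 : HasDerivAt (fun s => G (x, s)) (D (0, 1)) t := by
      have := (hGd (x, t)).hasFDerivAt.comp_hasDerivAt t
        ((hasDerivAt_const t x).prodMk (hasDerivAt_id t))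
      simpa [Function.comp_def] using this
    have h1' : HasDerivAt (fun s => G (x, s) ((1 : ℝ), (0 : ℝ)))
        (D (0, 1) (1, 0)) t := by
      have := h1.clm_apply (hasDerivAt_const t ((1 : ℝ), (0 : ℝ)))
      simpa using this
    have hZtt1 : Ztt x t = -(D (0, 1) (1, 0)) := by
      have heq : (fun s => Zt x s) = fun s => -(G (x, s) ((1:ℝ), (0:ℝ))) := by
        funext s; rw [htransport x s, hZxG x s]
      have := h1'.neg
      exact ((heq ▸ hZtt x t).unique this)
    -- Zxx x t = - D (1,0) (0,1)
    have h2 : HasDerivAt (fun y => G (y, t)) (D (1, 0)) x := by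
      have := (hGd (x, t)).hasFDerivAt.comp_hasDerivAt x
        ((hasDerivAt_id x).prodMk (hasDerivAt_const x t))
      simpa [Function.comp_def] using this
    have h2' : HasDerivAt (fun y => G (y, t) ((0 : ℝ), (1 : ℝ)))
        (D (1, 0) (0, 1)) x := by
      have := h2.clm_apply (hasDerivAt_const x ((0 : ℝ), (1 : ℝ)))
      simpa using this
    have hZxx1 : Zxx x t = -(D (1, 0) (0, 1)) := by
      have heq : (fun y => Zx y t) = fun y => -(G (y, t) ((0:ℝ), (1:ℝ))) := by
        funext y
        have : Zx y t = -Zt y t := by rw [htransport y t]; ring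
        rw [this, hZtG y t]
      have := h2'.neg
      exact ((heq ▸ hZxx x t).unique this)
    rw [hwave x t, hZtt1, hZxx1, hsym]
  · intro t
    -- differentiate the boundary condition in t
    have hbt : HasDerivAt (fun s => Z 0 s) (-c0 * wt 0 t) t := by
      have heq : (fun s => Z 0 s) = fun s => -c0 * w 0 s := by
        funext s; exact hZbc s
      rw [heq]
      exact (hwt 0 t).const_mul (-c0)
    have hZt0 : Zt 0 t = -c0 * wt 0 t := (hZt 0 t).unique hbt
    have hZx0 : Zx 0 t = c0 * wt 0 t := by
      have := htransport 0 t
      rw [hZt0] at this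
      linarith
    rw [hwbc t, hZx0, hZt0]
    have h1 : (1 : ℝ) - c0 ≠ 0 := sub_ne_zero.mpr (Ne.symm hc0')
    field_simp
    ring
end
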